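/- For every fixed Δ ≥ 0 and ρ > 0, the recursive sequence (β_n, ϖ_n) is well defined: for each n there exists a unique ϖ_n ∈ (0,∞) satisfying ∫_{−ϖ_n}^0 (∫_{−ϖ_n}^s max{β_n(w), g(w)} dw) ds = 1. Moreover, β_{n+1}(t) ≤ β_n(t) for all t ≤ 0 and ϖ_n ≤ ϖ_{n+1} for every n = 0, 1, 2, ... -/

import Mathlib

open MeasureTheory Set Filter

/-- `x` solves the delay equation `x''(t) + p(t)·x(t − τ(t)) = 0` on `I` in the
Carathéodory sense: `x` is differentiable on `I` and on `I` its derivative is an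
indefinite integral of `-p(u)·x(u − τ(u))` (so `x` and its derivative are locally
absolutely continuous there, and the equation holds for a.e. `t ∈ I`). -/
def SolvesDDE (p τ x : ℝ → ℝ) (I : Set ℝ) : Prop :=
  (∀ t ∈ I, HasDerivAt x (deriv x t) t) ∧
  (∀ t₀ ∈ I, ∀ t ∈ I, deriv x t = deriv x t₀ - ∫ u in t₀..t, p u * x (u - τ u))

/-- `r` is the solution `r_Δ` of `r''(t) + r(t − Δ) = 0`, `t ≥ 0`, with `r ≡ 1` on
`(-∞,0]` and `r'(0) = 0` (the derivative is an indefinite integral of `-r(· - Δ)`). -/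
def IsDelayCosine (Δ : ℝ) (r : ℝ → ℝ) : Prop :=
  (∀ t ≤ (0:ℝ), r t = 1) ∧
  (∀ t, 0 ≤ t → HasDerivAt r (deriv r t) t) ∧
  (∀ t, 0 ≤ t → deriv r t = - ∫ u in (0:ℝ)..t, r (u - Δ))

/-- `θ` is the first zero of `r` on `[0,∞)`. -/
def IsFirstZero (r : ℝ → ℝ) (θ : ℝ) : Prop :=
  0 < θ ∧ r θ = 0 ∧ ∀ t, 0 ≤ t → t < θ → 0 < r t

/-- `g(w) = ρ·r(θ − w − Δ)·χ_{[−Δ,0]}(w)`. -/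
noncomputable def gAux (ρ Δ θ : ℝ) (r : ℝ → ℝ) : ℝ → ℝ :=
  (Set.Icc (-Δ) (0:ℝ)).indicator fun w => ρ * r (θ - w - Δ)

/-- The double integral `∫_{-c}^0 (∫_{-c}^s max (β w) (g w) dw) ds`. -/
noncomputable def doubleInt (g β : ℝ → ℝ) (c : ℝ) : ℝ :=
  ∫ s in (-c)..(0:ℝ), ∫ w in (-c)..s, max (β w) (g w)

/-- The recursively defined sequences `β_n`, `ϖ_n` associated with `g`. -/
def IsBetaSeq (g : ℝ → ℝ) (β : ℕ → ℝ → ℝ) (ϖ : ℕ → ℝ) : Prop :=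
  (∀ t ≤ (0:ℝ), β 0 t = 1) ∧
  ∀ n : ℕ,
    (0 < ϖ n ∧ doubleInt g (β n) (ϖ n) = 1) ∧
    (∀ t, t ≤ -ϖ n → β (n+1) t = 1) ∧
    (∀ t, -ϖ n ≤ t → t ≤ 0 →
      β (n+1) t = 1 - ∫ s in (-ϖ n)..t, ∫ w in (-ϖ n)..s, max (β n w) (g w))

/-- `x` has a locally absolutely continuous derivative on `[a,b]`, with a.e. second
derivative `w`. -/
def HasSecondDerivAEOn (x w : ℝ → ℝ) (a b : ℝ) : Prop :=
  (∀ t ∈ Set.Icc a b, HasDerivAt x (deriv x t) t) ∧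
  (∀ t ∈ Set.Icc a b, deriv x t = deriv x a + ∫ u in a..t, w u)


noncomputable def DD (f : ℝ → ℝ) (c : ℝ) : ℝ :=
  ∫ s in (-c)..(0:ℝ), ∫ w in (-c)..s, f w

variable {f g β : ℝ → ℝ} {M K c c₁ c₂ : ℝ}

lemma intInt_of_bdd (hf : Measurable f) (h0 : ∀ w, 0 ≤ f w) (hM : ∀ w, f w ≤ M)
    (a b : ℝ) : IntervalIntegrable f volume a b := by
  rw [intervalIntegrable_iff]
  refine Measure.integrableOn_of_bounded (M := M) measure_Ioc_lt_top.ne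
    hf.aestronglyMeasurable (ae_of_all _ fun w => ?_)
  rw [Real.norm_eq_abs, abs_of_nonneg (h0 w)]; exact hM w

lemma cont_prim (hf : Measurable f) (h0 : ∀ w, 0 ≤ f w) (hM : ∀ w, f w ≤ M) (a : ℝ) :
    Continuous (fun s => ∫ w in a..s, f w) :=
  intervalIntegral.continuous_primitive (intInt_of_bdd hf h0 hM) a

lemma prim_nonneg (h0 : ∀ w, 0 ≤ f w) {a s : ℝ} (has : a ≤ s) :
    0 ≤ ∫ w in a..s, f w :=
  intervalIntegral.integral_nonneg has fun u _ => h0 u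

lemma prim_le (hf : Measurable f) (h0 : ∀ w, 0 ≤ f w) (hM : ∀ w, f w ≤ M)
    {a s : ℝ} (has : a ≤ s) : (∫ w in a..s, f w) ≤ M * (s - a) := by
  calc (∫ w in a..s, f w) ≤ ∫ _ in a..s, M :=
        intervalIntegral.integral_mono_on has (intInt_of_bdd hf h0 hM a s)
          intervalIntegrable_const (fun u _ => hM u)
    _ = M * (s - a) := by rw [intervalIntegral.integral_const, smul_eq_mul, mul_comm]

lemma DD_split (hf : Measurable f) (h0 : ∀ w, 0 ≤ f w) (hM : ∀ w, f w ≤ M)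
    (h1 : 0 ≤ c₁) (h12 : c₁ ≤ c₂) :
    DD f c₂ = DD f c₁ + (∫ s in (-c₂)..(-c₁), ∫ w in (-c₂)..s, f w)
      + c₁ * ∫ w in (-c₂)..(-c₁), f w := by
  have hii : ∀ a b, IntervalIntegrable f volume a b := intInt_of_bdd hf h0 hM
  have hic : ∀ a u v : ℝ, IntervalIntegrable (fun s => ∫ w in a..s, f w) volume u v :=
    fun a u v => (cont_prim hf h0 hM a).intervalIntegrable u v
  have e1 : DD f c₂ = (∫ s in (-c₂)..(-c₁), ∫ w in (-c₂)..s, f w)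
      + ∫ s in (-c₁)..0, ∫ w in (-c₂)..s, f w :=
    (intervalIntegral.integral_add_adjacent_intervals (hic _ _ _) (hic _ _ _)).symm
  have e2 : ∀ s : ℝ, (∫ w in (-c₂)..s, f w)
      = (∫ w in (-c₂)..(-c₁), f w) + ∫ w in (-c₁)..s, f w :=
    fun s => (intervalIntegral.integral_add_adjacent_intervals (hii _ _) (hii _ _)).symm
  have e3 : (∫ s in (-c₁)..0, ∫ w in (-c₂)..s, f w)
      = (∫ s in (-c₁)..(0:ℝ), ((∫ w in (-c₂)..(-c₁), f w) + ∫ w in (-c₁)..s, f w)) := by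
    simp_rw [← e2]
  have e4 : (∫ s in (-c₁)..(0:ℝ), ((∫ w in (-c₂)..(-c₁), f w) + ∫ w in (-c₁)..s, f w))
      = (0 - -c₁) • (∫ w in (-c₂)..(-c₁), f w) + DD f c₁ := by
    rw [intervalIntegral.integral_add intervalIntegrable_const (hic _ _ _),
      intervalIntegral.integral_const]
    rfl
  rw [e1, e3, e4]; simp [smul_eq_mul]; ring

lemma DD_mono (hf : Measurable f) (h0 : ∀ w, 0 ≤ f w) (hM : ∀ w, f w ≤ M)
    (h1 : 0 ≤ c₁) (h12 : c₁ ≤ c₂) : DD f c₁ ≤ DD f c₂ := by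
  rw [DD_split hf h0 hM h1 h12]
  have hA : 0 ≤ ∫ s in (-c₂)..(-c₁), ∫ w in (-c₂)..s, f w :=
    intervalIntegral.integral_nonneg (by linarith) (fun s hs => prim_nonneg h0 hs.1)
  have hD : 0 ≤ ∫ w in (-c₂)..(-c₁), f w := prim_nonneg h0 (by linarith)
  nlinarith [mul_nonneg h1 hD]

lemma DD_strict (hf : Measurable f) (h0 : ∀ w, 0 ≤ f w) (hM : ∀ w, f w ≤ M)
    (hpos : ∀ w < (0:ℝ), 0 < f w) (h1 : 0 < c₁) (h12 : c₁ < c₂) : DD f c₁ < DD f c₂ := by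
  rw [DD_split hf h0 hM h1.le h12.le]
  have hA : 0 ≤ ∫ s in (-c₂)..(-c₁), ∫ w in (-c₂)..s, f w :=
    intervalIntegral.integral_nonneg (by linarith) (fun s hs => prim_nonneg h0 hs.1)
  have hD : 0 < ∫ w in (-c₂)..(-c₁), f w :=
    intervalIntegral.intervalIntegral_pos_of_pos_on (intInt_of_bdd hf h0 hM _ _)
      (fun x hx => hpos x (hx.2.trans (by linarith))) (by linarith)
  nlinarith [mul_pos h1 hD]

lemma DD_zero : DD f 0 = 0 := by simp [DD]

lemma DD_diff_le (hf : Measurable f) (h0 : ∀ w, 0 ≤ f w) (hM : ∀ w, f w ≤ M)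
    (hM0 : 0 ≤ M) (h1 : 0 ≤ c₁) (h12 : c₁ ≤ c₂) :
    DD f c₂ - DD f c₁ ≤ M * (c₂ + c₁) * (c₂ - c₁) := by
  rw [DD_split hf h0 hM h1 h12]
  have hic : ∀ u v : ℝ, IntervalIntegrable (fun s => ∫ w in (-c₂)..s, f w) volume u v :=
    fun u v => (cont_prim hf h0 hM (-c₂)).intervalIntegrable u v
  have hA : (∫ s in (-c₂)..(-c₁), ∫ w in (-c₂)..s, f w) ≤ (c₂ - c₁) * (M * c₂) := by
    calc (∫ s in (-c₂)..(-c₁), ∫ w in (-c₂)..s, f w)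
        ≤ ∫ _ in (-c₂)..(-c₁), M * c₂ :=
          intervalIntegral.integral_mono_on (by linarith) (hic _ _) intervalIntegrable_const
            (fun s hs => le_trans (prim_le hf h0 hM hs.1) (by nlinarith [hs.2]))
      _ = (c₂ - c₁) * (M * c₂) := by
          rw [intervalIntegral.integral_const, smul_eq_mul]; ring_nf
  have hD : (∫ w in (-c₂)..(-c₁), f w) ≤ M * (c₂ - c₁) := by
    have := prim_le (a := -c₂) (s := -c₁) hf h0 hM (by linarith)
    linarith [this]
  have hD0 : 0 ≤ ∫ w in (-c₂)..(-c₁), f w := prim_nonneg h0 (by linarith)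
  nlinarith [mul_le_mul_of_nonneg_left hD h1]

lemma DD_contOn (hf : Measurable f) (h0 : ∀ w, 0 ≤ f w) (hM : ∀ w, f w ≤ M)
    (hM0 : 0 ≤ M) (R : ℝ) : ContinuousOn (DD f) (Icc 0 R) := by
  apply LipschitzOnWith.continuousOn (K := Real.toNNReal (M * (2 * R)))
  rw [lipschitzOnWith_iff_dist_le_mul]
  have key : ∀ x ∈ Icc (0:ℝ) R, ∀ y ∈ Icc (0:ℝ) R, x ≤ y →
      dist (DD f x) (DD f y) ≤ M * (2 * R) * dist x y := by
    intro x hx y hy hxy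
    rw [Real.dist_eq, Real.dist_eq, abs_sub_comm (DD f x), abs_sub_comm x y,
      abs_of_nonneg (sub_nonneg.2 (DD_mono hf h0 hM hx.1 hxy)),
      abs_of_nonneg (sub_nonneg.2 hxy)]
    have h2 := DD_diff_le hf h0 hM hM0 hx.1 hxy
    nlinarith [h2, mul_nonneg (mul_nonneg hM0 (sub_nonneg.2 hxy))
      (show (0:ℝ) ≤ 2 * R - (y + x) by linarith [hy.2, hx.1, hx.2])]
  intro x hx y hy
  rw [Real.coe_toNNReal _ (by nlinarith [(hx.1.trans hx.2 : (0:ℝ) ≤ R)])]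
  rcases le_total x y with h | h
  · exact key x hx y hy h
  · rw [dist_comm, dist_comm x y]; exact key y hy x hx h

lemma DD_lower (hf : Measurable f) (h0 : ∀ w, 0 ≤ f w) (hM : ∀ w, f w ≤ M)
    (hone : ∀ w ≤ -K, 1 ≤ f w) (hK : 0 ≤ K) (hc : K ≤ c) :
    (c - K)^2 / 2 ≤ DD f c := by
  have hii : ∀ a b, IntervalIntegrable f volume a b := intInt_of_bdd hf h0 hM
  have hic : ∀ u v : ℝ, IntervalIntegrable (fun s => ∫ w in (-c)..s, f w) volume u v :=
    fun u v => (cont_prim hf h0 hM (-c)).intervalIntegrable u v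
  have e1 : DD f c = (∫ s in (-c)..(-K), ∫ w in (-c)..s, f w)
      + ∫ s in (-K)..0, ∫ w in (-c)..s, f w :=
    (intervalIntegral.integral_add_adjacent_intervals (hic _ _) (hic _ _)).symm
  have h2 : 0 ≤ ∫ s in (-K)..0, ∫ w in (-c)..s, f w :=
    intervalIntegral.integral_nonneg (by linarith)
      (fun s hs => prim_nonneg h0 (le_trans (by linarith) hs.1))
  have h1 : (∫ s in (-c)..(-K), (s + c)) ≤ ∫ s in (-c)..(-K), ∫ w in (-c)..s, f w := by
    apply intervalIntegral.integral_mono_on (by linarith)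
      ((continuous_id.add continuous_const).intervalIntegrable _ _) (hic _ _)
    intro s hs
    have : (∫ w in (-c)..s, (1:ℝ)) ≤ ∫ w in (-c)..s, f w :=
      intervalIntegral.integral_mono_on hs.1 intervalIntegrable_const (hii _ _)
        (fun w hw => hone w (hw.2.trans hs.2))
    rwa [intervalIntegral.integral_const, smul_eq_mul, mul_one, sub_neg_eq_add] at this
  have hcalc : (∫ s in (-c)..(-K), (s + c)) = (c - K)^2 / 2 := by
    rw [show (∫ s in (-c)..(-K), (s + c)) = ∫ u in (-c + c)..(-K + c), u from
      intervalIntegral.integral_comp_add_right (fun u : ℝ => u) c, integral_id]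
    ring
  linarith

lemma DD_exists_unique (hf : Measurable f) (h0 : ∀ w, 0 ≤ f w) (hM : ∀ w, f w ≤ M)
    (hM1 : 1 ≤ M) (hpos : ∀ w < (0:ℝ), 0 < f w) (hone : ∀ w ≤ -K, 1 ≤ f w) (hK : 0 ≤ K) :
    ∃ c, (0 < c ∧ DD f c = 1) ∧ ∀ c', 0 < c' → DD f c' = 1 → c' = c := by
  have hM0 : 0 ≤ M := le_trans zero_le_one hM1
  have hR : (0:ℝ) ≤ K + 2 := by linarith
  have hFR : (1:ℝ) ≤ DD f (K + 2) := by
    have := DD_lower hf h0 hM hone hK (by linarith : K ≤ K + 2)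
    nlinarith
  have h1mem : (1:ℝ) ∈ Icc (DD f 0) (DD f (K + 2)) := by
    rw [DD_zero]; exact ⟨zero_le_one, hFR⟩
  obtain ⟨c, hcmem, hc⟩ := intermediate_value_Icc hR (DD_contOn hf h0 hM hM0 (K + 2)) h1mem
  have hc0 : 0 < c := by
    rcases hcmem.1.eq_or_lt with h | h
    · exfalso; rw [← h, DD_zero] at hc; norm_num at hc
    · exact h
  refine ⟨c, ⟨hc0, hc⟩, fun c' h' hc' => ?_⟩
  by_contra hne
  rcases lt_or_gt_of_ne hne with h | h
  · have := DD_strict hf h0 hM hpos h' h; rw [hc', hc] at this; exact lt_irrefl 1 this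
  · have := DD_strict hf h0 hM hpos hc0 h; rw [hc', hc] at this; exact lt_irrefl 1 this

/-- The invariant bundle carried along the recursion. -/
structure GoodBeta (g : ℝ → ℝ) (M : ℝ) (β : ℝ → ℝ) (K : ℝ) : Prop where
  cont : Continuous β
  nonneg : ∀ t, 0 ≤ β t
  le_one : ∀ t, β t ≤ 1
  Knn : 0 ≤ K
  eq_one : ∀ t ≤ -K, β t = 1
  pos : ∀ w < (0:ℝ), 0 < max (β w) (g w)

lemma doubleInt_eq_DD : doubleInt g β = DD (fun w => max (β w) (g w)) := rfl

lemma GoodBeta.fmeas (hg : Measurable g) (hb : GoodBeta g M β K) : Measurable (fun w => max (β w) (g w)) :=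
  hb.cont.measurable.max hg

lemma GoodBeta.f0 (hb : GoodBeta g M β K) : ∀ w, 0 ≤ max (β w) (g w) :=
  fun w => le_trans (hb.nonneg w) (le_max_left _ _)

lemma GoodBeta.fM (hgM : ∀ w, g w ≤ M) (hM1 : 1 ≤ M) (hb : GoodBeta g M β K) : ∀ w, max (β w) (g w) ≤ M :=
  fun w => max_le ((hb.le_one w).trans hM1) (hgM w)

lemma GoodBeta.fone (hb : GoodBeta g M β K) : ∀ w ≤ -K, 1 ≤ max (β w) (g w) :=
  fun w hw => (hb.eq_one w hw) ▸ le_max_left _ _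

open scoped Classical

/-- The unique positive solution of `doubleInt g β c = 1`. -/
noncomputable def nextW (g β : ℝ → ℝ) : ℝ :=
  if h : ∃ c, (0 < c ∧ doubleInt g β c = 1) ∧
      ∀ c', 0 < c' → doubleInt g β c' = 1 → c' = c then h.choose else 1

/-- The next `β` in the recursion. -/
noncomputable def nextB (g β : ℝ → ℝ) : ℝ → ℝ := fun t =>
  1 - ∫ s in (-nextW g β)..(max (min t 0) (-nextW g β)),
        ∫ w in (-nextW g β)..s, max (β w) (g w)

lemma nextW_spec (hg : Measurable g) (hgM : ∀ w, g w ≤ M) (hM1 : 1 ≤ M)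
    (hb : GoodBeta g M β K) :
    (0 < nextW g β ∧ doubleInt g β (nextW g β) = 1) ∧
      ∀ c, 0 < c → doubleInt g β c = 1 → c = nextW g β := by
  have hex : ∃ c, (0 < c ∧ doubleInt g β c = 1) ∧
      ∀ c', 0 < c' → doubleInt g β c' = 1 → c' = c := by
    rw [doubleInt_eq_DD]
    exact DD_exists_unique (hb.fmeas hg) hb.f0 (hb.fM hgM hM1) hM1 hb.pos hb.fone hb.Knn
  rw [nextW, dif_pos hex]
  exact ⟨hex.choose_spec.1, hex.choose_spec.2⟩

lemma nextB_eq_of_mem {t : ℝ} (h1 : -nextW g β ≤ t) (h2 : t ≤ 0) :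
    nextB g β t = 1 - ∫ s in (-nextW g β)..t, ∫ w in (-nextW g β)..s, max (β w) (g w) := by
  rw [nextB, min_eq_left h2, max_eq_left h1]

lemma nextB_eq_one' (hW0 : 0 ≤ nextW g β) {t : ℝ} (h1 : t ≤ -nextW g β) :
    nextB g β t = 1 := by
  rw [nextB, min_eq_left (h1.trans (neg_nonpos.2 hW0)), max_eq_right h1,
    intervalIntegral.integral_same, sub_zero]

lemma nextB_tail (hg : Measurable g) (hgM : ∀ w, g w ≤ M) (hM1 : 1 ≤ M)
    (hb : GoodBeta g M β K) {t : ℝ} (h1 : -nextW g β ≤ t) (h2 : t ≤ 0) :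
    nextB g β t = ∫ s in t..0, ∫ w in (-nextW g β)..s, max (β w) (g w) := by
  obtain ⟨⟨hW0, hW1⟩, -⟩ := nextW_spec hg hgM hM1 hb
  have hic : ∀ u v : ℝ, IntervalIntegrable
      (fun s => ∫ w in (-nextW g β)..s, max (β w) (g w)) volume u v :=
    fun u v => (cont_prim (hb.fmeas hg) hb.f0 (hb.fM hgM hM1) _).intervalIntegrable u v
  have hadd := intervalIntegral.integral_add_adjacent_intervals (hic (-nextW g β) t) (hic t 0)
  have hone : (∫ s in (-nextW g β)..(0:ℝ), ∫ w in (-nextW g β)..s, max (β w) (g w)) = 1 := hW1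
  rw [nextB_eq_of_mem h1 h2]
  linarith

lemma nextB_good (hg : Measurable g) (hgM : ∀ w, g w ≤ M) (hM1 : 1 ≤ M)
    (hb : GoodBeta g M β K) : GoodBeta g M (nextB g β) (nextW g β) := by
  obtain ⟨⟨hW0, hW1⟩, -⟩ := nextW_spec hg hgM hM1 hb
  set W := nextW g β with hWdef
  set inn : ℝ → ℝ := fun s => ∫ w in (-W)..s, max (β w) (g w) with hinn
  have hii : ∀ a b, IntervalIntegrable (fun w => max (β w) (g w)) volume a b :=
    intInt_of_bdd (hb.fmeas hg) hb.f0 (hb.fM hgM hM1)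
  have hinncont : Continuous inn := cont_prim (hb.fmeas hg) hb.f0 (hb.fM hgM hM1) _
  have hic : ∀ u v : ℝ, IntervalIntegrable inn volume u v := hinncont.intervalIntegrable
  have hGone : (∫ s in (-W)..(0:ℝ), inn s) = 1 := hW1
  have hclamp1 : ∀ t : ℝ, -W ≤ max (min t 0) (-W) := fun t => le_max_right _ _
  have hclamp2 : ∀ t : ℝ, max (min t 0) (-W) ≤ 0 :=
    fun t => max_le (le_trans (min_le_right _ _) le_rfl) (neg_nonpos.2 hW0.le)
  have hG0 : ∀ u, -W ≤ u → 0 ≤ ∫ s in (-W)..u, inn s :=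
    fun u hu => intervalIntegral.integral_nonneg hu (fun s hs => prim_nonneg hb.f0 hs.1)
  have hG1 : ∀ u, -W ≤ u → u ≤ 0 → (∫ s in (-W)..u, inn s) ≤ 1 := by
    intro u hu1 hu2
    have hadd := intervalIntegral.integral_add_adjacent_intervals (hic (-W) u) (hic u 0)
    have h2 : 0 ≤ ∫ s in u..0, inn s :=
      intervalIntegral.integral_nonneg hu2 (fun s hs => prim_nonneg hb.f0 (hu1.trans hs.1))
    linarith
  have hBeq : nextB g β = fun t => 1 - ∫ s in (-W)..(max (min t 0) (-W)), inn s := rfl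
  constructor
  · rw [hBeq]
    exact continuous_const.sub ((intervalIntegral.continuous_primitive hic (-W)).comp
      ((continuous_id.min continuous_const).max continuous_const))
  · intro t
    rw [hBeq]
    simp only
    linarith [hG1 _ (hclamp1 t) (hclamp2 t)]
  · intro t
    rw [hBeq]
    simp only
    linarith [hG0 _ (hclamp1 t)]
  · exact hW0.le
  · intro t ht; exact nextB_eq_one' hW0.le ht
  · intro w hw
    rcases le_or_gt w (-W) with h | h
    · rw [nextB_eq_one' hW0.le h]
      exact lt_of_lt_of_le one_pos (le_max_left _ _)
    · have htail : nextB g β w = ∫ s in w..0, inn s :=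
        nextB_tail hg hgM hM1 hb h.le hw.le
      have hpos : 0 < ∫ s in w..0, inn s := by
        apply intervalIntegral.intervalIntegral_pos_of_pos_on (hic w 0) _ hw
        intro s hs
        exact intervalIntegral.intervalIntegral_pos_of_pos_on (hii _ _)
          (fun x hx => hb.pos x (hx.2.trans hs.2)) (h.trans hs.1)
      exact lt_of_lt_of_le (htail ▸ hpos) (le_max_left _ _)

lemma DD_mono_f {f f' : ℝ → ℝ} (hf : Measurable f) (h0 : ∀ w, 0 ≤ f w) (hM : ∀ w, f w ≤ M)
    (hf' : Measurable f') (h0' : ∀ w, 0 ≤ f' w) (hM' : ∀ w, f' w ≤ M)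
    (hle : ∀ w ≤ (0:ℝ), f' w ≤ f w) (hc : 0 ≤ c) : DD f' c ≤ DD f c := by
  apply intervalIntegral.integral_mono_on (by linarith)
    ((cont_prim hf' h0' hM' _).intervalIntegrable _ _)
    ((cont_prim hf h0 hM _).intervalIntegrable _ _)
  intro s hs
  exact intervalIntegral.integral_mono_on hs.1 (intInt_of_bdd hf' h0' hM' _ _)
    (intInt_of_bdd hf h0 hM _ _) (fun w hw => hle w (hw.2.trans hs.2))

lemma W_mono (hg : Measurable g) (hgM : ∀ w, g w ≤ M) (hM1 : 1 ≤ M)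
    (hb : GoodBeta g M β K) (hb' : GoodBeta g M β' K')
    (hle : ∀ t ≤ (0:ℝ), β' t ≤ β t) : nextW g β ≤ nextW g β' := by
  obtain ⟨⟨hW0, hW1⟩, -⟩ := nextW_spec hg hgM hM1 hb
  obtain ⟨⟨hW0', hW1'⟩, -⟩ := nextW_spec hg hgM hM1 hb'
  by_contra hlt
  push_neg at hlt
  have h1 : doubleInt g β' (nextW g β') ≤ doubleInt g β (nextW g β') := by
    rw [doubleInt_eq_DD, doubleInt_eq_DD]
    exact DD_mono_f (hb.fmeas hg) hb.f0 (hb.fM hgM hM1) (hb'.fmeas hg) hb'.f0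
      (hb'.fM hgM hM1) (fun w hw => max_le_max (hle w hw) le_rfl) hW0'.le
  have h2 : doubleInt g β (nextW g β') < doubleInt g β (nextW g β) :=
    DD_strict (hb.fmeas hg) hb.f0 (hb.fM hgM hM1) hb.pos hW0' hlt
  rw [hW1, hW1'] at *
  linarith

lemma tail_nonneg {δ : ℝ → ℝ} {a b t : ℝ} (hδ : Continuous δ)
    (hmono : ∀ x ∈ Icc a b, ∀ y ∈ Icc a b, x ≤ y → δ x ≤ δ y)
    (htot : 0 ≤ ∫ s in a..b, δ s) (ht : t ∈ Icc a b) : 0 ≤ ∫ s in t..b, δ s := by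
  rcases le_or_gt 0 (δ t) with h | h
  · have h1 : (∫ _ in t..b, δ t) ≤ ∫ s in t..b, δ s :=
      intervalIntegral.integral_mono_on ht.2 intervalIntegrable_const
        (hδ.intervalIntegrable t b) (fun s hs => hmono t ht s ⟨ht.1.trans hs.1, hs.2⟩ hs.1)
    have h2 : (∫ _ in t..b, δ t) = (b - t) * δ t := by
      rw [intervalIntegral.integral_const, smul_eq_mul]
    nlinarith [sub_nonneg.2 ht.2]
  · have h1 : (∫ s in a..t, δ s) ≤ ∫ _ in a..t, δ t :=
      intervalIntegral.integral_mono_on ht.1 (hδ.intervalIntegrable a t)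
        intervalIntegrable_const (fun s hs => hmono s ⟨hs.1, hs.2.trans ht.2⟩ t ht hs.2)
    have h2 : (∫ _ in a..t, δ t) = (t - a) * δ t := by
      rw [intervalIntegral.integral_const, smul_eq_mul]
    have hadd := intervalIntegral.integral_add_adjacent_intervals
      (hδ.intervalIntegrable (μ := volume) a t) (hδ.intervalIntegrable (μ := volume) t b)
    nlinarith [sub_nonneg.2 ht.1]

lemma step_mono (hg : Measurable g) (hgM : ∀ w, g w ≤ M) (hM1 : 1 ≤ M)
    (hb : GoodBeta g M β K) (hb' : GoodBeta g M (nextB g β) (nextW g β))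
    (hle : ∀ t ≤ (0:ℝ), nextB g β t ≤ β t)
    (hW : nextW g β ≤ nextW g (nextB g β)) :
    ∀ t ≤ (0:ℝ), nextB g (nextB g β) t ≤ nextB g β t := by
  obtain ⟨⟨hW0, hW1⟩, -⟩ := nextW_spec hg hgM hM1 hb
  obtain ⟨⟨hW0', hW1'⟩, -⟩ := nextW_spec hg hgM hM1 hb'
  set β' : ℝ → ℝ := nextB g β with hβ'
  set W : ℝ := nextW g β with hWd
  set W' : ℝ := nextW g β' with hW'd
  set inn : ℝ → ℝ := fun s => ∫ w in (-W)..s, max (β w) (g w) with hinn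
  set inn' : ℝ → ℝ := fun s => ∫ w in (-W')..s, max (β' w) (g w) with hinn'
  have hii : ∀ a b, IntervalIntegrable (fun w => max (β w) (g w)) volume a b :=
    intInt_of_bdd (hb.fmeas hg) hb.f0 (hb.fM hgM hM1)
  have hii' : ∀ a b, IntervalIntegrable (fun w => max (β' w) (g w)) volume a b :=
    intInt_of_bdd (hb'.fmeas hg) hb'.f0 (hb'.fM hgM hM1)
  have hinncont : Continuous inn := cont_prim (hb.fmeas hg) hb.f0 (hb.fM hgM hM1) _
  have hinncont' : Continuous inn' := cont_prim (hb'.fmeas hg) hb'.f0 (hb'.fM hgM hM1) _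
  intro t ht0
  rcases le_or_gt t (-W) with h | h
  · have e : β' t = 1 := nextB_eq_one' hW0.le h
    rw [e]
    exact (nextB_good hg hgM hM1 hb').le_one t
  · have h1 : -W ≤ t := h.le
    have h1' : -W' ≤ t := le_trans (neg_le_neg hW) h1
    have e1 : nextB g β' t = ∫ s in t..0, inn' s := nextB_tail hg hgM hM1 hb' h1' ht0
    have e2 : β' t = ∫ s in t..0, inn s := nextB_tail hg hgM hM1 hb h1 ht0
    rw [e1, e2]
    have hsub : (∫ s in t..0, (inn s - inn' s))
        = (∫ s in t..0, inn s) - ∫ s in t..0, inn' s :=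
      intervalIntegral.integral_sub (hinncont.intervalIntegrable _ _)
        (hinncont'.intervalIntegrable _ _)
    have htail : 0 ≤ ∫ s in t..0, (inn s - inn' s) := by
      apply tail_nonneg (a := -W) (b := 0) (hinncont.sub hinncont')
      · intro x hx y hy hxy
        have ex : inn x + (∫ w in x..y, max (β w) (g w)) = inn y :=
          intervalIntegral.integral_add_adjacent_intervals (hii _ _) (hii _ _)
        have ex' : inn' x + (∫ w in x..y, max (β' w) (g w)) = inn' y :=
          intervalIntegral.integral_add_adjacent_intervals (hii' _ _) (hii' _ _)
        have hmm : (∫ w in x..y, max (β' w) (g w)) ≤ ∫ w in x..y, max (β w) (g w) :=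
          intervalIntegral.integral_mono_on hxy (hii' _ _) (hii _ _)
            (fun w hw => max_le_max (hle w (hw.2.trans hy.2)) le_rfl)
        simp only [Pi.sub_apply] at ex ex' ⊢
        linarith
      · have e0 : (∫ s in (-W)..(0:ℝ), (inn s - inn' s))
            = (∫ s in (-W)..(0:ℝ), inn s) - ∫ s in (-W)..(0:ℝ), inn' s :=
          intervalIntegral.integral_sub (hinncont.intervalIntegrable _ _)
            (hinncont'.intervalIntegrable _ _)
        have e1 : (∫ s in (-W)..(0:ℝ), inn s) = 1 := hW1
        have e2 : (∫ s in (-W')..(-W), inn' s) + (∫ s in (-W)..(0:ℝ), inn' s) = 1 := by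
          rw [intervalIntegral.integral_add_adjacent_intervals
            (hinncont'.intervalIntegrable _ _) (hinncont'.intervalIntegrable _ _)]
          exact hW1'
        have e3 : 0 ≤ ∫ s in (-W')..(-W), inn' s :=
          intervalIntegral.integral_nonneg (neg_le_neg hW)
            (fun s hs => prim_nonneg hb'.f0 hs.1)
        simp only [Pi.sub_apply]
        rw [e0, e1]
        linarith
      · exact ⟨h1, ht0⟩
    linarith

noncomputable def Bseq (g : ℝ → ℝ) : ℕ → ℝ → ℝ
  | 0 => fun _ => 1
  | n + 1 => nextB g (Bseq g n)

section Seq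
variable (hg : Measurable g) (hg0 : ∀ w, 0 ≤ g w) (hgM : ∀ w, g w ≤ M) (hM1 : 1 ≤ M)

lemma Bseq_good0 : GoodBeta g M (Bseq g 0) 0 := by
  refine ⟨continuous_const, fun t => zero_le_one, fun t => le_rfl, le_rfl,
    fun t _ => rfl, fun w _ => lt_of_lt_of_le one_pos (le_max_left _ _)⟩

lemma Bseq_good (hg : Measurable g) (hgM : ∀ w, g w ≤ M) (hM1 : 1 ≤ M) :
    ∀ n, ∃ K, GoodBeta g M (Bseq g n) K := by
  intro n
  induction n with
  | zero => exact ⟨0, Bseq_good0⟩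
  | succ n ih =>
    obtain ⟨K, hK⟩ := ih
    exact ⟨_, nextB_good hg hgM hM1 hK⟩

lemma Bseq_goodS (hg : Measurable g) (hgM : ∀ w, g w ≤ M) (hM1 : 1 ≤ M) (n : ℕ) :
    GoodBeta g M (Bseq g (n+1)) (nextW g (Bseq g n)) :=
  nextB_good hg hgM hM1 (Bseq_good hg hgM hM1 n).choose_spec

lemma Bseq_mono (hg : Measurable g) (hgM : ∀ w, g w ≤ M) (hM1 : 1 ≤ M) (n : ℕ) :
    (∀ t ≤ (0:ℝ), Bseq g (n+1) t ≤ Bseq g n t) ∧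
      nextW g (Bseq g n) ≤ nextW g (Bseq g (n+1)) := by
  induction n with
  | zero =>
    have h1 : ∀ t ≤ (0:ℝ), Bseq g 1 t ≤ Bseq g 0 t :=
      fun t _ => (Bseq_goodS hg hgM hM1 0).le_one t
    exact ⟨h1, W_mono hg hgM hM1 Bseq_good0 (Bseq_goodS hg hgM hM1 0) h1⟩
  | succ n ih =>
    have hK := (Bseq_good hg hgM hM1 n).choose_spec
    have h1 : ∀ t ≤ (0:ℝ), Bseq g (n+2) t ≤ Bseq g (n+1) t :=
      step_mono hg hgM hM1 hK (Bseq_goodS hg hgM hM1 n) ih.1 ih.2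
    exact ⟨h1, W_mono hg hgM hM1 (Bseq_goodS hg hgM hM1 n) (Bseq_goodS hg hgM hM1 (n+1)) h1⟩
end Seq

/-- the sequences `β_n`, `ϖ_n` are well defined, `β_n` is pointwise
nonincreasing and `ϖ_n` is nondecreasing. -/
theorem beta_seq_well_defined
    (Δ ρ : ℝ) (hΔ : 0 ≤ Δ) (hρ : 0 < ρ)
    (r : ℝ → ℝ) (θ : ℝ) (hr : IsDelayCosine Δ r) (hθ : IsFirstZero r θ) :
    ∃ β : ℕ → ℝ → ℝ, ∃ ϖ : ℕ → ℝ,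
      IsBetaSeq (gAux ρ Δ θ r) β ϖ ∧
      (∀ n : ℕ, ∀ c : ℝ, 0 < c → doubleInt (gAux ρ Δ θ r) (β n) c = 1 → c = ϖ n) ∧
      (∀ n : ℕ, ∀ t ≤ (0:ℝ), β (n+1) t ≤ β n t) ∧
      (∀ n : ℕ, ϖ n ≤ ϖ (n+1)) := by
  set g : ℝ → ℝ := gAux ρ Δ θ r with hgdef
  -- continuity of r
  have hrc : Continuous r := by
    rw [continuous_iff_continuousAt]
    intro x
    rcases lt_or_ge x 0 with hx | hx
    · have hev : (fun _ => (1:ℝ)) =ᶠ[nhds x] r :=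
        eventually_of_mem (Iio_mem_nhds hx) (fun y hy => (hr.1 y (le_of_lt hy)).symm)
      exact ContinuousAt.congr continuousAt_const hev
    · exact (hr.2.1 x hx).continuousAt
  -- nonnegativity of r below θ
  have hr0 : ∀ x ≤ θ, 0 ≤ r x := by
    intro x hx
    rcases le_or_gt x 0 with h | h
    · rw [hr.1 x h]; exact zero_le_one
    · rcases eq_or_lt_of_le hx with h' | h'
      · rw [h', hθ.2.1]
      · exact (hθ.2.2 x h.le h').le
  -- measurability and nonnegativity of g
  have hg : Measurable g := by
    rw [hgdef, gAux]
    exact (continuous_const.mul (hrc.comp (by fun_prop))).measurable.indicator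
      measurableSet_Icc
  have hg0 : ∀ w, 0 ≤ g w := by
    intro w
    rw [hgdef, gAux]
    apply Set.indicator_nonneg
    intro a ha
    exact mul_nonneg hρ.le (hr0 _ (by linarith [ha.1]))
  -- bound for g
  obtain ⟨x₀, hx₀mem, hx₀⟩ := isCompact_Icc.exists_isMaxOn
    (nonempty_Icc.2 (by linarith : θ - Δ ≤ θ)) hrc.continuousOn
  set M : ℝ := max 1 (ρ * r x₀) with hMdef
  have hM1 : (1:ℝ) ≤ M := le_max_left _ _
  have hgM : ∀ w, g w ≤ M := by
    intro w
    rw [hgdef, gAux]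
    by_cases hw : w ∈ Set.Icc (-Δ) (0:ℝ)
    · rw [Set.indicator_of_mem hw]
      refine le_trans ?_ (le_max_right _ _)
      exact mul_le_mul_of_nonneg_left
        (hx₀ ⟨by linarith [hw.2], by linarith [hw.1]⟩) hρ.le
    · rw [Set.indicator_of_notMem hw]
      linarith
  -- assemble
  refine ⟨Bseq g, fun n => nextW g (Bseq g n), ⟨fun t _ => rfl, fun n => ?_⟩,
    fun n => (nextW_spec hg hgM hM1 (Bseq_good hg hgM hM1 n).choose_spec).2,
    fun n => (Bseq_mono hg hgM hM1 n).1, fun n => (Bseq_mono hg hgM hM1 n).2⟩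
  obtain ⟨⟨hW0, hW1⟩, -⟩ := nextW_spec hg hgM hM1 (Bseq_good hg hgM hM1 n).choose_spec
  refine ⟨⟨hW0, hW1⟩, (Bseq_goodS hg hgM hM1 n).eq_one, fun t h1 h2 => ?_⟩
  exact nextB_eq_of_mem h1 h2
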